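/- The set of smooth compactly supported complex-valued functions on ℝ whose support is contained in (0,∞) is dense, with respect to the topology of the Schwartz space 𝒮(ℝ), in the closed subspace {φ ∈ 𝒮(ℝ) : φ(x) = 0 for all x ≤ 0}. Equivalently, every Schwartz function vanishing on (−∞,0] is the limit in every Schwartz seminorm of smooth functions compactly supported in (0,∞). -/

import Mathlib

open Real Filter Topology Set
open scoped ContDiff


lemma iteratedDeriv_const' {F : Type*} [NormedAddCommGroup F] [NormedSpace ℝ F]
    {i : ℕ} (hi : i ≠ 0) (c : F) (x : ℝ) : iteratedDeriv i (fun _ : ℝ => c) x = 0 := by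
  rw [iteratedDeriv_eq_iteratedFDeriv, iteratedFDeriv_const_of_ne hi]
  simp

-- bound on iterated derivatives of smoothTransition
lemma st_bound (i : ℕ) :
    ∃ B : ℝ, 0 ≤ B ∧ ∀ x : ℝ, ‖iteratedDeriv i Real.smoothTransition x‖ ≤ B := by
  rcases Nat.eq_zero_or_pos i with rfl | hi
  · exact ⟨1, zero_le_one, fun x => by
      simp [Real.norm_eq_abs, abs_le, Real.smoothTransition.nonneg,
        Real.smoothTransition.le_one, neg_le_of_neg_le]
      nlinarith [Real.smoothTransition.nonneg x, Real.smoothTransition.le_one x]⟩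
  · have hc : Continuous (iteratedDeriv i Real.smoothTransition) := by
      have := Real.smoothTransition.contDiff (n := (⊤ : ℕ∞))
      exact this.continuous_iteratedDeriv i (by exact_mod_cast le_top)
    have hsupp : HasCompactSupport (iteratedDeriv i Real.smoothTransition) := by
      apply HasCompactSupport.intro (isCompact_Icc (a := (0:ℝ)) (b := 1))
      intro x hx
      simp only [Set.mem_Icc, not_and_or, not_le] at hx
      rcases hx with hx | hx
      · have : Real.smoothTransition =ᶠ[𝓝 x] (fun _ => (0:ℝ)) := by
          filter_upwards [Iio_mem_nhds hx] with y hy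
          exact Real.smoothTransition.zero_of_nonpos (le_of_lt hy)
        rw [this.iteratedDeriv_eq]
        exact iteratedDeriv_const' hi.ne' _ _
      · have : Real.smoothTransition =ᶠ[𝓝 x] (fun _ => (1:ℝ)) := by
          filter_upwards [Ioi_mem_nhds hx] with y hy
          exact Real.smoothTransition.one_of_one_le (le_of_lt hy)
        rw [this.iteratedDeriv_eq]
        exact iteratedDeriv_const' hi.ne' _ _
    obtain ⟨C, hC⟩ := hsupp.exists_bound_of_continuous hc
    exact ⟨max C 0, le_max_right _ _, fun x => (hC x).trans (le_max_left _ _)⟩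

lemma phi_flat0 (φ : SchwartzMap ℝ ℂ) (hφ : ∀ x : ℝ, x ≤ 0 → φ x = 0) (j : ℕ) :
    ∀ x : ℝ, x ≤ 0 → iteratedDeriv j (⇑φ) x = 0 := by
  have hcont : Continuous (iteratedDeriv j ⇑φ) :=
    (φ.smooth ⊤).continuous_iteratedDeriv j (by exact_mod_cast le_top)
  have hopen : ∀ x < (0:ℝ), iteratedDeriv j (⇑φ) x = 0 := by
    intro x hx
    have h : (⇑φ) =ᶠ[𝓝 x] (fun _ => (0:ℂ)) := by
      filter_upwards [Iio_mem_nhds hx] with y hy using hφ y hy.le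
    rw [h.iteratedDeriv_eq]
    rcases Nat.eq_zero_or_pos j with rfl | hj
    · simp
    · exact iteratedDeriv_const' hj.ne' _ _
  intro x hx
  rcases hx.lt_or_eq with h | rfl
  · exact hopen x h
  · have h : Set.EqOn (iteratedDeriv j ⇑φ) (fun _ => 0) (closure (Iio (0:ℝ))) :=
      Set.EqOn.closure (fun y hy => hopen y hy) hcont continuous_const
    have h0 : (0:ℝ) ∈ closure (Iio (0:ℝ)) := by rw [closure_Iio]; exact self_mem_Iic
    exact h h0

lemma phi_flat (φ : SchwartzMap ℝ ℂ) (hφ : ∀ x : ℝ, x ≤ 0 → φ x = 0) (M : ℕ) :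
    ∀ j, ∃ C : ℝ, 0 ≤ C ∧ ∀ x : ℝ, 0 ≤ x → x ≤ 1 → ‖iteratedDeriv j (⇑φ) x‖ ≤ C * x ^ M := by
  induction M with
  | zero =>
    intro j
    refine ⟨SchwartzMap.seminorm ℝ 0 j φ, apply_nonneg _ _, fun x _ _ => ?_⟩
    rw [pow_zero, mul_one]
    have h := SchwartzMap.le_seminorm ℝ 0 j φ x
    rwa [pow_zero, one_mul, norm_iteratedFDeriv_eq_norm_iteratedDeriv] at h
  | succ M ih =>
    intro j
    obtain ⟨C, hC, hbound⟩ := ih (j + 1)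
    refine ⟨C, hC, fun x hx0 hx1 => ?_⟩
    have hdiff : ∀ t ∈ Icc (0:ℝ) x,
        HasDerivWithinAt (iteratedDeriv j ⇑φ) (iteratedDeriv (j+1) (⇑φ) t) (Icc (0:ℝ) x) t := by
      intro t _
      have hd : DifferentiableAt ℝ (iteratedDeriv j ⇑φ) t := by
        have := ((φ.smooth ⊤).differentiable_iteratedDeriv j
          (by exact_mod_cast WithTop.coe_lt_top j)).differentiableAt (x := t)
        exact this
      have h2 := hd.hasDerivAt
      rw [← iteratedDeriv_succ] at h2
      exact h2.hasDerivWithinAt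
    have bound : ∀ t ∈ Ico (0:ℝ) x, ‖iteratedDeriv (j+1) (⇑φ) t‖ ≤ C * x ^ M := by
      intro t ht
      calc ‖iteratedDeriv (j+1) (⇑φ) t‖ ≤ C * t ^ M :=
            hbound t ht.1 ((ht.2.le).trans hx1)
        _ ≤ C * x ^ M := by
            apply mul_le_mul_of_nonneg_left (pow_le_pow_left₀ ht.1 ht.2.le M) hC
    have := norm_image_sub_le_of_norm_deriv_le_segment' hdiff bound x (right_mem_Icc.mpr hx0)
    rw [phi_flat0 φ hφ j 0 le_rfl, sub_zero, sub_zero] at this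
    calc ‖iteratedDeriv j (⇑φ) x‖ ≤ C * x ^ M * x := this
      _ = C * x ^ (M + 1) := by ring

lemma iteratedDeriv_succ_sub_const (i : ℕ) (f : ℝ → ℝ) (a : ℝ) :
    iteratedDeriv (i+1) (fun y => f y - a) = iteratedDeriv (i+1) f := by
  rw [iteratedDeriv_succ', iteratedDeriv_succ']
  have h : (deriv fun y => f y - a) = deriv f := funext fun y => deriv_sub_const (f := f) a
  rw [h]

lemma qlt {c x Bmax : ℝ} {m : ℕ} (hc : 2 ≤ c) (hx : x < c)
    (hB : ∀ i ≤ m, ∀ z : ℝ, ‖iteratedDeriv i Real.smoothTransition z‖ ≤ Bmax)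
    (hB1 : 1 ≤ Bmax) {i : ℕ} (hi : i ≤ m) :
    ‖iteratedDeriv i
      (fun y => Real.smoothTransition (c*y-1) * (1 - Real.smoothTransition (y-c)) - 1) x‖
      ≤ c ^ i * Bmax := by
  have hc0 : (0:ℝ) < c := by linarith
  have heq : (fun y => Real.smoothTransition (c*y-1) * (1 - Real.smoothTransition (y-c)) - 1)
      =ᶠ[𝓝 x] (fun y => Real.smoothTransition (c*y-1) - 1) := by
    filter_upwards [Iio_mem_nhds hx] with y hy
    simp only [Set.mem_Iio] at hy
    have h0 : Real.smoothTransition (y - c) = 0 :=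
      Real.smoothTransition.zero_of_nonpos (by linarith)
    rw [h0]; ring
  rw [heq.iteratedDeriv_eq]
  cases i with
  | zero =>
    simp only [iteratedDeriv_zero, pow_zero, one_mul]
    refine le_trans ?_ hB1
    rw [Real.norm_eq_abs, abs_le]
    constructor
    · nlinarith [Real.smoothTransition.nonneg (c*x-1)]
    · nlinarith [Real.smoothTransition.le_one (c*x-1)]
  | succ i' =>
    rw [iteratedDeriv_succ_sub_const]
    have hf : ContDiff ℝ (i'+1 : ℕ) (fun z : ℝ => Real.smoothTransition (z + (-1))) := by
      exact (Real.smoothTransition.contDiff (n := (i'+1 : ℕ))).comp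
        (contDiff_id.add contDiff_const)
    have hrw : (fun y : ℝ => Real.smoothTransition (c*y-1))
        = fun y : ℝ => (fun z : ℝ => Real.smoothTransition (z + (-1))) (c * y) := by
      funext y; rw [sub_eq_add_neg]
    rw [hrw, iteratedDeriv_comp_const_mul hf c, iteratedDeriv_comp_add_const]
    rw [norm_mul, Real.norm_eq_abs (c ^ (i'+1)), abs_of_pos (pow_pos hc0 _)]
    exact mul_le_mul_of_nonneg_left
      (by simpa [sub_eq_add_neg] using hB (i'+1) hi (c*x + -1)) (le_of_lt (pow_pos hc0 _))

lemma qge {c x Bmax : ℝ} {m : ℕ} (hc : 2 ≤ c) (hx : 2/c < x)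
    (hB : ∀ i ≤ m, ∀ z : ℝ, ‖iteratedDeriv i Real.smoothTransition z‖ ≤ Bmax)
    {i : ℕ} (hi : i ≤ m) :
    ‖iteratedDeriv i
      (fun y => Real.smoothTransition (c*y-1) * (1 - Real.smoothTransition (y-c)) - 1) x‖
      ≤ Bmax := by
  have hc0 : (0:ℝ) < c := by linarith
  have heq : (fun y => Real.smoothTransition (c*y-1) * (1 - Real.smoothTransition (y-c)) - 1)
      =ᶠ[𝓝 x] (fun y => -(Real.smoothTransition (y + (-c)))) := by
    filter_upwards [Ioi_mem_nhds hx] with y hy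
    simp only [Set.mem_Ioi] at hy
    have h2 : (2:ℝ) ≤ c * y := by
      rw [div_lt_iff₀ hc0] at hy; linarith
    have h1 : Real.smoothTransition (c*y - 1) = 1 :=
      Real.smoothTransition.one_of_one_le (by linarith)
    rw [h1, sub_eq_add_neg y c]; ring
  rw [heq.iteratedDeriv_eq, iteratedDeriv_fun_neg, norm_neg, iteratedDeriv_comp_add_const]
  exact hB i hi (x + -c)

lemma key_est (φ : SchwartzMap ℝ ℂ) (hφ : ∀ x : ℝ, x ≤ 0 → φ x = 0) (k m : ℕ) :
    ∃ K : ℝ, 0 ≤ K ∧ ∀ c : ℝ, 2 ≤ c → ∀ x : ℝ,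
      ‖x‖ ^ k * ‖iteratedFDeriv ℝ m
        (fun y => (Real.smoothTransition (c*y-1) * (1 - Real.smoothTransition (y-c)) - 1) • φ y)
        x‖ ≤ K / c := by
  choose Bf hBf0 hBf using st_bound
  set Bmax : ℝ := 1 + ∑ i ∈ Finset.range (m+1), Bf i with hBmax
  have hBsum : 0 ≤ ∑ i ∈ Finset.range (m+1), Bf i := Finset.sum_nonneg fun i _ => hBf0 i
  have hB1 : 1 ≤ Bmax := by simp only [hBmax]; linarith
  have hB0 : 0 ≤ Bmax := by linarith
  have hB : ∀ i ≤ m, ∀ z : ℝ, ‖iteratedDeriv i Real.smoothTransition z‖ ≤ Bmax := by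
    intro i hi z
    refine (hBf i z).trans ?_
    have h := Finset.single_le_sum (f := Bf) (fun j _ => hBf0 j)
      (Finset.mem_range.mpr (Nat.lt_succ_of_le hi))
    simp only [hBmax]; linarith
  choose Cf hCf0 hCf using phi_flat φ hφ (m+1)
  set Cmax : ℝ := ∑ j ∈ Finset.range (m+1), Cf j with hCmaxd
  have hC0 : 0 ≤ Cmax := Finset.sum_nonneg fun j _ => hCf0 j
  have hC : ∀ j, j ≤ m → ∀ x : ℝ, 0 ≤ x → x ≤ 1 →
      ‖iteratedDeriv j (⇑φ) x‖ ≤ Cmax * x ^ (m+1) := by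
    intro j hj x h0 h1
    refine (hCf j x h0 h1).trans ?_
    have h := Finset.single_le_sum (f := Cf) (fun i _ => hCf0 i)
      (Finset.mem_range.mpr (Nat.lt_succ_of_le hj))
    exact mul_le_mul_of_nonneg_right h (pow_nonneg h0 _)
  set S : ℝ := ∑ j ∈ Finset.range (m+1), SchwartzMap.seminorm ℝ (k+1) j φ with hSd
  have hS0 : 0 ≤ S := Finset.sum_nonneg fun j _ => apply_nonneg _ _
  have hS : ∀ j, j ≤ m → ∀ x : ℝ, ‖x‖^(k+1) * ‖iteratedFDeriv ℝ j (⇑φ) x‖ ≤ S := by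
    intro j hj x
    refine (SchwartzMap.le_seminorm ℝ (k+1) j φ x).trans ?_
    exact Finset.single_le_sum (f := fun j => SchwartzMap.seminorm ℝ (k+1) j φ)
      (fun i _ => apply_nonneg _ _) (Finset.mem_range.mpr (Nat.lt_succ_of_le hj))
  refine ⟨2^m * Bmax * (2^(m+1) * Cmax + S), by positivity, fun c hc x => ?_⟩
  have hc0 : (0:ℝ) < c := by linarith
  have hKc : 0 ≤ 2^m * Bmax * (2^(m+1) * Cmax + S) / c := by positivity
  set q : ℝ → ℝ :=
    fun y => Real.smoothTransition (c*y-1) * (1 - Real.smoothTransition (y-c)) - 1 with hqd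
  have hq : ContDiff ℝ ∞ q := by
    apply ContDiff.sub _ contDiff_const
    apply ContDiff.mul
    · exact Real.smoothTransition.contDiff.comp ((contDiff_const.mul contDiff_id).sub contDiff_const)
    · exact ContDiff.sub contDiff_const
        (Real.smoothTransition.contDiff.comp (contDiff_id.sub contDiff_const))
  have hmN : (m : WithTop ℕ∞) ≤ (∞ : WithTop ℕ∞) := by
    exact_mod_cast le_top
  have hLeib := norm_iteratedFDeriv_smul_le (𝕜 := ℝ) hq (φ.smooth ⊤) x hmN
  have h2c1 : 2/c ≤ 1 := by rw [div_le_one hc0]; linarith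
  rcases le_or_gt x 0 with hx0 | hx0
  · -- x ≤ 0 : everything vanishes
    have hzero : ∀ j, ‖iteratedFDeriv ℝ j (⇑φ) x‖ = 0 := fun j => by
      rw [norm_iteratedFDeriv_eq_norm_iteratedDeriv, phi_flat0 φ hφ j x hx0, norm_zero]
    have hle0 : ‖iteratedFDeriv ℝ m (fun y => q y • φ y) x‖ ≤ 0 := by
      refine hLeib.trans (le_of_eq ?_)
      refine Finset.sum_eq_zero fun i _ => ?_
      rw [hzero (m - i), mul_zero]
    calc ‖x‖^k * ‖iteratedFDeriv ℝ m (fun y => q y • φ y) x‖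
        ≤ ‖x‖^k * 0 := mul_le_mul_of_nonneg_left hle0 (by positivity)
      _ = 0 := mul_zero _
      _ ≤ _ := hKc
  rcases le_or_gt x (2/c) with hx2 | hx2
  · -- 0 < x ≤ 2/c : flatness estimate
    have hx1 : x ≤ 1 := hx2.trans h2c1
    have hxk : ‖x‖^k ≤ 1 :=
      pow_le_one₀ (norm_nonneg _) (by rw [Real.norm_eq_abs, abs_of_pos hx0]; exact hx1)
    have hterm : ∀ i ∈ Finset.range (m+1),
        (m.choose i : ℝ) * ‖iteratedFDeriv ℝ i q x‖ * ‖iteratedFDeriv ℝ (m-i) (⇑φ) x‖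
          ≤ (m.choose i : ℝ) * (Bmax * Cmax * 2^(m+1) / c) := by
      intro i hi
      rw [Finset.mem_range, Nat.lt_succ_iff] at hi
      have h1 : ‖iteratedFDeriv ℝ i q x‖ ≤ c^i * Bmax := by
        rw [norm_iteratedFDeriv_eq_norm_iteratedDeriv]
        exact qlt hc (by linarith) hB hB1 hi
      have h2 : ‖iteratedFDeriv ℝ (m-i) (⇑φ) x‖ ≤ Cmax * x^(m+1) := by
        rw [norm_iteratedFDeriv_eq_norm_iteratedDeriv]
        exact hC (m-i) (Nat.sub_le m i) x hx0.le hx1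
      have hcx : c^i * x^(m+1) ≤ 2^(m+1) / c := by
        have hxp : x^(m+1) ≤ (2/c)^(m+1) := pow_le_pow_left₀ hx0.le hx2 _
        have hci : c^i ≤ c^m := pow_le_pow_right₀ (by linarith) hi
        calc c^i * x^(m+1) ≤ c^m * (2/c)^(m+1) :=
              mul_le_mul hci hxp (by positivity) (by positivity)
          _ = 2^(m+1) * (c^m / c^(m+1)) := by rw [div_pow]; ring
          _ = 2^(m+1) / c := by rw [pow_succ]; field_simp; ring
      calc (m.choose i : ℝ) * ‖iteratedFDeriv ℝ i q x‖ * ‖iteratedFDeriv ℝ (m-i) (⇑φ) x‖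
          ≤ (m.choose i : ℝ) * (c^i * Bmax) * (Cmax * x^(m+1)) := by
            apply mul_le_mul (mul_le_mul_of_nonneg_left h1 (by positivity)) h2
              (norm_nonneg _) (by positivity)
        _ = (m.choose i : ℝ) * (Bmax * Cmax * (c^i * x^(m+1))) := by ring
        _ ≤ (m.choose i : ℝ) * (Bmax * Cmax * (2^(m+1) / c)) := by
            apply mul_le_mul_of_nonneg_left _ (by positivity)
            exact mul_le_mul_of_nonneg_left hcx (by positivity)
        _ = (m.choose i : ℝ) * (Bmax * Cmax * 2^(m+1) / c) := by ring
    have hsum : ‖iteratedFDeriv ℝ m (fun y => q y • φ y) x‖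
        ≤ 2^m * (Bmax * Cmax * 2^(m+1) / c) := by
      refine hLeib.trans ?_
      refine (Finset.sum_le_sum hterm).trans (le_of_eq ?_)
      rw [← Finset.sum_mul]
      congr 1
      rw [← Nat.cast_sum, Nat.sum_range_choose]
      push_cast; ring
    calc ‖x‖^k * ‖iteratedFDeriv ℝ m (fun y => q y • φ y) x‖
        ≤ 1 * (2^m * (Bmax * Cmax * 2^(m+1) / c)) :=
          mul_le_mul hxk hsum (norm_nonneg _) zero_le_one
      _ = 2^m * Bmax * (2^(m+1) * Cmax) / c := by ring
      _ ≤ 2^m * Bmax * (2^(m+1) * Cmax + S) / c := by gcongr; linarith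
  rcases lt_or_ge x c with hxc | hxc
  · -- 2/c < x < c : the function vanishes near x
    have heq : (fun y => q y • φ y) =ᶠ[𝓝 x] (fun _ => (0:ℂ)) := by
      filter_upwards [Ioo_mem_nhds hx2 hxc] with y hy
      have h1 : Real.smoothTransition (c*y - 1) = 1 := by
        apply Real.smoothTransition.one_of_one_le
        have := (div_lt_iff₀ hc0).mp hy.1
        linarith
      have h2 : Real.smoothTransition (y - c) = 0 :=
        Real.smoothTransition.zero_of_nonpos (by linarith [hy.2])
      have hq0 : q y = 0 := by simp only [hqd, h1, h2]; ring
      rw [hq0, zero_smul]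
    have hz : ‖iteratedFDeriv ℝ m (fun y => q y • φ y) x‖ = 0 := by
      rw [norm_iteratedFDeriv_eq_norm_iteratedDeriv, heq.iteratedDeriv_eq]
      rcases Nat.eq_zero_or_pos m with rfl | hm
      · simp
      · rw [iteratedDeriv_const' hm.ne' _ _, norm_zero]
    rw [hz, mul_zero]
    exact hKc
  · -- c ≤ x : decay estimate
    have hxpos : (0:ℝ) < x := by linarith
    have hnx : c ≤ ‖x‖ := by rw [Real.norm_eq_abs, abs_of_pos hxpos]; exact hxc
    have hterm : ∀ i ∈ Finset.range (m+1),
        ‖x‖^k * ((m.choose i : ℝ) * ‖iteratedFDeriv ℝ i q x‖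
          * ‖iteratedFDeriv ℝ (m-i) (⇑φ) x‖)
          ≤ (m.choose i : ℝ) * (Bmax * (S / c)) := by
      intro i hi
      rw [Finset.mem_range, Nat.lt_succ_iff] at hi
      have h1 : ‖iteratedFDeriv ℝ i q x‖ ≤ Bmax := by
        rw [norm_iteratedFDeriv_eq_norm_iteratedDeriv]
        exact qge hc (by linarith) hB hi
      have h2 : ‖x‖^k * ‖iteratedFDeriv ℝ (m-i) (⇑φ) x‖ ≤ S / c := by
        rw [le_div_iff₀ hc0]
        have hSx := hS (m-i) (Nat.sub_le m i) x
        rw [pow_succ] at hSx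
        calc ‖x‖^k * ‖iteratedFDeriv ℝ (m-i) (⇑φ) x‖ * c
            ≤ ‖x‖^k * ‖iteratedFDeriv ℝ (m-i) (⇑φ) x‖ * ‖x‖ := by
              apply mul_le_mul_of_nonneg_left hnx (by positivity)
          _ = ‖x‖^k * ‖x‖ * ‖iteratedFDeriv ℝ (m-i) (⇑φ) x‖ := by ring
          _ ≤ S := hSx
      calc ‖x‖^k * ((m.choose i : ℝ) * ‖iteratedFDeriv ℝ i q x‖
            * ‖iteratedFDeriv ℝ (m-i) (⇑φ) x‖)
          = (m.choose i : ℝ) * ‖iteratedFDeriv ℝ i q x‖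
            * (‖x‖^k * ‖iteratedFDeriv ℝ (m-i) (⇑φ) x‖) := by ring
        _ ≤ (m.choose i : ℝ) * Bmax * (S / c) := by
            apply mul_le_mul (mul_le_mul_of_nonneg_left h1 (by positivity)) h2
              (by positivity) (by positivity)
        _ = (m.choose i : ℝ) * (Bmax * (S / c)) := by ring
    calc ‖x‖^k * ‖iteratedFDeriv ℝ m (fun y => q y • φ y) x‖
        ≤ ‖x‖^k * ∑ i ∈ Finset.range (m+1), (m.choose i : ℝ) * ‖iteratedFDeriv ℝ i q x‖
            * ‖iteratedFDeriv ℝ (m-i) (⇑φ) x‖ :=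
          mul_le_mul_of_nonneg_left hLeib (by positivity)
      _ = ∑ i ∈ Finset.range (m+1), ‖x‖^k * ((m.choose i : ℝ) * ‖iteratedFDeriv ℝ i q x‖
            * ‖iteratedFDeriv ℝ (m-i) (⇑φ) x‖) := by
          rw [Finset.mul_sum]
      _ ≤ ∑ i ∈ Finset.range (m+1), (m.choose i : ℝ) * (Bmax * (S / c)) :=
          Finset.sum_le_sum hterm
      _ = 2^m * (Bmax * (S / c)) := by
          rw [← Finset.sum_mul, ← Nat.cast_sum, Nat.sum_range_choose]; push_cast; ring
      _ = 2^m * Bmax * S / c := by ring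
      _ ≤ 2^m * Bmax * (2^(m+1) * Cmax + S) / c := by
          have h2C : (0:ℝ) ≤ 2^(m+1) * Cmax := by positivity
          gcongr
          linarith

lemma hcut_temperate {c : ℝ} (hc : 2 ≤ c) :
    Function.HasTemperateGrowth
      (fun y : ℝ => Real.smoothTransition (c*y-1) * (1 - Real.smoothTransition (y-c))) := by
  have hc0 : (0:ℝ) < c := by linarith
  have hsmooth : ContDiff ℝ ∞
      (fun y : ℝ => Real.smoothTransition (c*y-1) * (1 - Real.smoothTransition (y-c))) := by
    apply ContDiff.mul
    · exact Real.smoothTransition.contDiff.comp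
        ((contDiff_const.mul contDiff_id).sub contDiff_const)
    · exact ContDiff.sub contDiff_const
        (Real.smoothTransition.contDiff.comp (contDiff_id.sub contDiff_const))
  have hsupp : HasCompactSupport
      (fun y : ℝ => Real.smoothTransition (c*y-1) * (1 - Real.smoothTransition (y-c))) := by
    apply HasCompactSupport.intro (isCompact_Icc (a := 1/c) (b := c+1))
    intro y hy
    simp only [Set.mem_Icc, not_and_or, not_le] at hy
    rcases hy with hy | hy
    · have h0 : Real.smoothTransition (c*y - 1) = 0 := by
        apply Real.smoothTransition.zero_of_nonpos
        have hyc : y * c < 1 := (lt_div_iff₀ hc0).mp hy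
        linarith [(mul_comm c y : c*y = y*c)]
      rw [h0, zero_mul]
    · have h1 : Real.smoothTransition (y - c) = 1 :=
        Real.smoothTransition.one_of_one_le (by linarith)
      rw [h1, sub_self, mul_zero]
  refine ⟨hsmooth, fun n => ?_⟩
  obtain ⟨C, hCb⟩ := (hsupp.iteratedFDeriv n).exists_bound_of_continuous
    (hsmooth.continuous_iteratedFDeriv (by exact_mod_cast le_top))
  exact ⟨0, max C 0, fun x => by
    rw [pow_zero, mul_one]
    exact (hCb x).trans (le_max_left _ _)⟩

/-- Smooth compactly supported functions with support in `(0,∞)` are dense, in the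
Schwartz topology, in the closed subspace of Schwartz functions vanishing on `(-∞,0]`. -/
theorem denseRange_compactly_supported_in_schwartz_vanishing_nonpos (φ : SchwartzMap ℝ ℂ)
    (hφ : ∀ x : ℝ, x ≤ 0 → φ x = 0) :
    φ ∈ closure {ψ : SchwartzMap ℝ ℂ |
      HasCompactSupport (⇑ψ) ∧ tsupport (⇑ψ) ⊆ Set.Ioi (0 : ℝ)} := by
  have hc : ∀ n : ℕ, (2:ℝ) ≤ (n:ℝ) + 2 := fun n => by
    have := Nat.cast_nonneg (α := ℝ) n; linarith
  have hc0 : ∀ n : ℕ, (0:ℝ) < (n:ℝ) + 2 := fun n => by linarith [hc n]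
  set F : ℕ → SchwartzMap ℝ ℂ := fun n =>
    SchwartzMap.bilinLeftCLM ((ContinuousLinearMap.lsmul ℝ ℝ : ℝ →L[ℝ] ℂ →L[ℝ] ℂ).flip)
      (hcut_temperate (hc n)) φ with hF
  have hFapp : ∀ (n : ℕ) (y : ℝ), F n y =
      (Real.smoothTransition (((n:ℝ)+2)*y-1)
        * (1 - Real.smoothTransition (y-((n:ℝ)+2)))) • φ y := fun n y => rfl
  have hmem : ∀ n : ℕ, F n ∈ {ψ : SchwartzMap ℝ ℂ |
      HasCompactSupport (⇑ψ) ∧ tsupport (⇑ψ) ⊆ Set.Ioi (0 : ℝ)} := by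
    intro n
    set c : ℝ := (n:ℝ) + 2
    have hval : ∀ y : ℝ, y ∉ Set.Icc (1/c) (c+1) → F n y = 0 := by
      intro y hy
      rw [hFapp]
      simp only [Set.mem_Icc, not_and_or, not_le] at hy
      rcases hy with hy | hy
      · have h0 : Real.smoothTransition (c*y - 1) = 0 := by
          apply Real.smoothTransition.zero_of_nonpos
          have hyc : y * c < 1 := (lt_div_iff₀ (hc0 n)).mp hy
          linarith [(mul_comm c y : c*y = y*c)]
        rw [h0, zero_mul, zero_smul]
      · have h1 : Real.smoothTransition (y - c) = 1 :=
          Real.smoothTransition.one_of_one_le (by linarith)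
        rw [h1, sub_self, mul_zero, zero_smul]
    have hcs : HasCompactSupport (⇑(F n)) :=
      HasCompactSupport.intro isCompact_Icc hval
    refine ⟨hcs, ?_⟩
    have hsub : Function.support (⇑(F n)) ⊆ Set.Icc (1/c) (c+1) := by
      intro y hy
      by_contra hyn
      exact hy (hval y hyn)
    refine (closure_minimal hsub isClosed_Icc).trans ?_
    intro y hy
    have h1c : 0 < 1/c := by positivity
    exact lt_of_lt_of_le h1c hy.1
  have htend : Tendsto F atTop (𝓝 φ) := by
    rw [(schwartz_withSeminorms ℝ ℝ ℂ).tendsto_nhds F φ]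
    rintro ⟨k, m⟩ ε hε
    obtain ⟨K, hK0, hK⟩ := key_est φ hφ k m
    have hlim : Tendsto (fun n : ℕ => K / ((n:ℝ) + 2)) atTop (𝓝 0) := by
      apply Tendsto.div_atTop tendsto_const_nhds
      exact tendsto_atTop_add_const_right _ 2 tendsto_natCast_atTop_atTop
    filter_upwards [hlim.eventually (gt_mem_nhds hε)] with n hn
    refine lt_of_le_of_lt ?_ hn
    simp only [SchwartzMap.schwartzSeminormFamily_apply]
    apply SchwartzMap.seminorm_le_bound ℝ k m (F n - φ) (by positivity)
    intro x
    have heq : ⇑(F n - φ) = fun y =>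
        (Real.smoothTransition (((n:ℝ)+2)*y-1)
          * (1 - Real.smoothTransition (y-((n:ℝ)+2))) - 1) • φ y := by
      funext y
      rw [SchwartzMap.sub_apply, hFapp, sub_smul, one_smul]
    rw [heq]
    exact hK ((n:ℝ)+2) (hc n) x
  exact mem_closure_of_tendsto htend (Filter.Eventually.of_forall hmem)
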